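/- Rank-reducing RTT=TTR relation for n = 2: for all a, b ∈ {0,1,2} and i, j ∈ {0,1}, ∑_{a',b'=0}^{1} R^{(1)}(y/x)^{a',b'}_{i,j} T(y)_{b'b} T(x)_{a'a} = ∑_{i',j'=0}^{2} T(x)_{ii'} T(y)_{jj'} R^{(2)}(y/x)^{a,b}_{i',j'}, where R^{(1)} is the 2-dimensional (n=1) ASEP R matrix, R^{(2)} is the 3-dimensional (n=2) ASEP R matrix, and T(z)_{00}=1, T(z)_{01}=z k, T(z)_{02}=z a⁻, T(z)_{10}=a⁺, T(z)_{11}=0, T(z)_{12}=z. -/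

import Mathlib

set_option maxHeartbeats 2000000


/-- The ASEP R matrix: `Rmat t z a b c d = R(z)^{a,b}_{c,d}`. -/
def Rmat {K : Type*} [DivisionRing K] {n : ℕ} (t z : K) (a b c d : Fin (n + 1)) : K :=
  if a = c ∧ b = d then
    (if c = d then 1 else (1 - z) * t ^ (if c < d then 1 else 0) / (1 - t * z))
  else if a = d ∧ b = c then (1 - t) * z ^ (if d < c then 1 else 0) / (1 - t * z)
  else 0

/-- The `n = 2` operator `T(z)` with a single t-oscillator:
`T(z)_{00} = 1`, `T(z)_{01} = z k`, `T(z)_{02} = z a⁻`, `T(z)_{10} = a⁺`, `T(z)_{11} = 0`,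
`T(z)_{12} = z`. -/
def Tmat {K : Type*} [Field K] {A : Type*} [Ring A] [Algebra K A]
    (ap am k : A) (z : K) : Fin 2 → Fin 3 → A :=
  ![![1, z • k, z • am], ![ap, 0, z • (1 : A)]]

/-- Rank-reducing `RTT = TTR` relation for `n = 2`: for all `a, b ∈ {0,1,2}`,
`i, j ∈ {0,1}`,
`∑_{a',b'=0}^{1} R⁽¹⁾(y/x)^{a',b'}_{i,j} T(y)_{b'b} T(x)_{a'a}
  = ∑_{i',j'=0}^{2} T(x)_{ii'} T(y)_{jj'} R⁽²⁾(y/x)^{a,b}_{i',j'}`. -/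
theorem stmt15 {K : Type*} [Field K] {A : Type*} [Ring A] [Algebra K A]
    (t x y : K) (ap am k : A)
    (hx : x ≠ 0) (hd : 1 - t * (y / x) ≠ 0)
    (h1 : k * ap = t • (ap * k)) (h2 : t • (k * am) = am * k)
    (h3 : am * ap = 1 - t • k) (h4 : ap * am = 1 - k) :
    ∀ (a b : Fin 3) (i j : Fin 2),
      ∑ a' : Fin 2, ∑ b' : Fin 2,
        Rmat t (y / x) a' b' i j • (Tmat ap am k y b' b * Tmat ap am k x a' a)
      = ∑ i' : Fin 3, ∑ j' : Fin 3,
          Rmat t (y / x) a b i' j' • (Tmat ap am k x i i' * Tmat ap am k y j j') := by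
  have hd' : x - t * y ≠ 0 := by
    intro h
    exact hd (by rw [show (1 : K) - t * (y / x) = (x - t * y) / x by field_simp, h, zero_div])
  have hd'' : x - y * t ≠ 0 := by rwa [mul_comm y t]
  intro a b i j
  fin_cases a <;> fin_cases b <;> fin_cases i <;> fin_cases j <;>
    simp only [Fin.sum_univ_succ, Fin.sum_univ_zero, Tmat, Fin.isValue,
      Matrix.cons_val', Matrix.cons_val_zero, Matrix.cons_val_one, Matrix.head_cons,
      Matrix.head_fin_const, Matrix.empty_val', Matrix.cons_val_fin_one, Matrix.cons_val, Fin.reduceFinMk, Fin.succ_zero_eq_one, Fin.succ_one_eq_two] <;>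
    norm_num [Rmat, Fin.ext_iff, Fin.lt_def] <;>
    (try simp only [smul_mul_assoc, mul_smul_comm, smul_smul, smul_sub, smul_add, one_mul, mul_one,
      zero_mul, mul_zero, smul_zero, add_zero, zero_add, h1, h4, ← h2, h3, sub_zero,
      neg_zero]) <;>
    match_scalars <;>
    field_simp [hd', hd''] <;>
    (first | ring1 | exact Or.inl (by ring))
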